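/- arXiv:2405.02851 — 2 statements merged into one kernel-verified Lean document; each statement's English description precedes it below -/
import Mathlib

section
/- Let f∈𝒦⁻ and suppose inf_{n∈ℕ}(f(n+1)−f(n)) = 0. Then T_f is unbounded: there is no constant C such that ‖T_fφ‖ ≤ C‖φ‖ for all φ∈ℓ²_fin(ℕ). -/
open Filter Topology
open scoped ENNReal

noncomputable section

abbrev l2 : Type := lp (fun _ : ℕ => ℂ) 2

def xi (n : ℕ) : l2 := lp.single 2 n 1

def FinSupp (φ : l2) : Prop := (Function.support (⇑φ : ℕ → ℂ)).Finite

/-- The class 𝒦. -/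
def MemK (f : ℕ → ℝ) : Prop := 0 < f 0 ∧ ∀ n, f n < f (n + 1)

/-- The class 𝒦⁻. -/
def MemKminus (f : ℕ → ℝ) : Prop := MemK f ∧ Summable (fun n => 1 / (f n) ^ 2)

def fsq (f : ℕ → ℝ) : ℕ → ℝ := fun n => (f n) ^ 2

/-- the sequence of the multiplication operator `f(N)` applied to φ -/
def mulSeq (f : ℕ → ℝ) (φ : ℕ → ℂ) : ℕ → ℂ := fun n => ((f n : ℝ) : ℂ) * φ n

/-- the sequence of `f(N)^p` applied to φ -/
def powSeq (f : ℕ → ℝ) (p : ℕ) (φ : ℕ → ℂ) : ℕ → ℂ := fun n => (((f n) ^ p : ℝ) : ℂ) * φ n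

/-- coordinates of `T_{f,m} φ`. -/
def TfmSeq (f : ℕ → ℝ) (m : ℕ) (φ : ℕ → ℂ) : ℕ → ℂ := fun n =>
  Complex.I * ∑ k ∈ Finset.Icc 1 m,
    ((if k ≤ n then φ (n - k) / ((f n - f (n - k) : ℝ) : ℂ) else 0)
      - φ (n + k) / ((f (n + k) - f n : ℝ) : ℂ))

/-- `(φ, ψ)` is in the graph of `T_f`. -/
def InGraphTf (f : ℕ → ℝ) (φ ψ : l2) : Prop :=
  ∃ h : ∀ m, Memℓp (TfmSeq f m (⇑φ)) 2,
    Tendsto (fun m => (⟨TfmSeq f m (⇑φ), h m⟩ : l2)) atTop (𝓝 ψ)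


-- AUX

def gfun (f : ℕ → ℝ) (n : ℕ) : ℕ → ℂ :=
  fun j => if j = n then 0 else Complex.I / ((f j - f n : ℝ) : ℂ)

lemma memK_strictMono {f : ℕ → ℝ} (hf : MemK f) : StrictMono f :=
  strictMono_nat_of_lt_succ hf.2

lemma memK_pos {f : ℕ → ℝ} (hf : MemK f) (n : ℕ) : 0 < f n :=
  hf.1.trans_le ((memK_strictMono hf).monotone (Nat.zero_le n))

lemma memKminus_tendsto {f : ℕ → ℝ} (hf : MemKminus f) : Tendsto f atTop atTop := by
  apply tendsto_atTop_atTop_of_monotone (memK_strictMono hf.1).monotone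
  by_contra h
  push_neg at h
  obtain ⟨b, hb⟩ := h
  have hb0 : 0 < b := (memK_pos hf.1 0).trans (hb 0)
  have h0 := hf.2.tendsto_atTop_zero
  have : ∀ᶠ n in atTop, 1 / f n ^ 2 < 1 / b ^ 2 :=
    h0.eventually (eventually_lt_nhds (by positivity))
  obtain ⟨n, hn⟩ := this.exists
  have hfn := memK_pos hf.1 n
  have : 1 / b ^ 2 ≤ 1 / f n ^ 2 := by
    apply one_div_le_one_div_of_le (by positivity)
    exact pow_le_pow_left₀ hfn.le (hb n).le 2
  linarith

lemma gfun_summable {f : ℕ → ℝ} (hf : MemKminus f) (n : ℕ) :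
    Summable (fun j => ‖gfun f n j‖ ^ (2 : ℝ)) := by
  have htop := memKminus_tendsto hf
  obtain ⟨N, hN⟩ := (htop.eventually (eventually_ge_atTop (2 * f n))).exists_forall_of_atTop
  rw [← summable_nat_add_iff N]
  have hrp : ∀ x : ℝ, x ^ (2:ℝ) = x ^ (2:ℕ) := fun x => by
    rw [← Real.rpow_natCast x 2]; norm_num
  simp only [hrp]
  have hpos := memK_pos hf.1
  have hmono := (memK_strictMono hf.1).monotone
  refine Summable.of_nonneg_of_le (fun j => by positivity) ?_
    (((summable_nat_add_iff N).mpr hf.2).mul_left 4)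
  · intro j
    have h1 : 2 * f n ≤ f (j + N) := hN (j + N) (Nat.le_add_left _ _)
    have h2 : 0 < f n := hpos n
    have h3 : 0 < f (j + N) := hpos _
    have h4 : f (j + N) / 2 ≤ f (j + N) - f n := by linarith
    have h5 : (0:ℝ) < f (j + N) - f n := by linarith
    by_cases hjn : j + N = n
    · simp [gfun, hjn]
      positivity
    · rw [gfun, if_neg hjn]
      rw [norm_div, Complex.norm_I, Complex.norm_real]
      rw [Real.norm_eq_abs, abs_of_pos h5]
      rw [div_pow, one_pow]
      rw [div_le_iff₀ (by positivity)]
      have : f (j + N) ^ 2 / 4 ≤ (f (j + N) - f n) ^ 2 := by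
        nlinarith
      calc (1:ℝ) = 4 * (1 / f (j+N) ^ 2) * (f (j+N) ^ 2 / 4) := by
            field_simp
        _ ≤ 4 * (1 / f (j+N) ^ 2) * (f (j+N) - f n) ^ 2 := by
            apply mul_le_mul_of_nonneg_left this (by positivity)

lemma gfun_memℓp {f : ℕ → ℝ} (hf : MemKminus f) (n : ℕ) : Memℓp (gfun f n) 2 := by
  apply memℓp_gen
  have : (2 : ℝ≥0∞).toReal = (2 : ℝ) := by norm_num
  rw [this]
  exact gfun_summable hf n

lemma xi_apply (n j : ℕ) : (⇑(xi n) : ℕ → ℂ) j = if j = n then 1 else 0 := by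
  rcases eq_or_ne j n with h | h
  · subst h; simp [xi, lp.single_apply_self]
  · simp [xi, lp.single_apply_ne _ _ _ h, h]

lemma TfmSeq_xi (f : ℕ → ℝ) (hf : MemK f) (n m j : ℕ) :
    TfmSeq f m (⇑(xi n)) j =
      if j ∈ Finset.Icc (n - m) (n + m) then gfun f n j else 0 := by
  have hsm := memK_strictMono hf
  rw [TfmSeq]
  simp only [xi_apply]
  rcases lt_trichotomy j n with hj | hj | hj
  · -- j < n : only the second part can contribute, at k = n - j
    have hsum : ∀ k ∈ Finset.Icc 1 m,
        ((if k ≤ j then (if j - k = n then (1:ℂ) else 0) / ((f j - f (j - k) : ℝ) : ℂ) else 0)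
          - (if j + k = n then (1:ℂ) else 0) / ((f (j + k) - f j : ℝ) : ℂ))
        = if k = n - j then -(1 / ((f n - f j : ℝ) : ℂ)) else 0 := by
      intro k hk
      rw [Finset.mem_Icc] at hk
      have h1 : ¬ (j - k = n ∧ k ≤ j) := by
        rintro ⟨h, hkj⟩; omega
      have hfirst : (if k ≤ j then (if j - k = n then (1:ℂ) else 0) / ((f j - f (j - k) : ℝ) : ℂ) else 0) = 0 := by
        by_cases hkj : k ≤ j
        · rw [if_pos hkj, if_neg (fun h => h1 ⟨h, hkj⟩), zero_div]
        · rw [if_neg hkj]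
      rw [hfirst, zero_sub]
      rcases eq_or_ne k (n - j) with hknj | hknj
      · have : j + k = n := by omega
        rw [if_pos hknj, if_pos this, this]
      · have : j + k ≠ n := by omega
        rw [if_neg hknj, if_neg this, zero_div, neg_zero]
    rw [Finset.sum_congr rfl hsum, Finset.sum_ite_eq' (Finset.Icc 1 m) (n - j)]
    have hjic : (j ∈ Finset.Icc (n - m) (n + m)) ↔ (n - j ∈ Finset.Icc 1 m) := by
      simp only [Finset.mem_Icc]; omega
    rcases em (n - j ∈ Finset.Icc 1 m) with h | h
    · rw [if_pos h, if_pos (hjic.mpr h), gfun, if_neg hj.ne]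
      have hlt : f j < f n := hsm hj
      rw [mul_neg, mul_one_div]
      have hcast : ((f j - f n : ℝ) : ℂ) = -((f n - f j : ℝ) : ℂ) := by push_cast; ring
      rw [hcast, div_neg]
    · rw [if_neg h, if_neg ((not_iff_not.mpr hjic).mpr h), mul_zero]
  · -- j = n : everything is zero
    subst hj
    have hsum : ∀ k ∈ Finset.Icc 1 m,
        ((if k ≤ j then (if j - k = j then (1:ℂ) else 0) / ((f j - f (j - k) : ℝ) : ℂ) else 0)
          - (if j + k = j then (1:ℂ) else 0) / ((f (j + k) - f j : ℝ) : ℂ)) = 0 := by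
      intro k hk
      rw [Finset.mem_Icc] at hk
      have h1 : (if j + k = j then (1:ℂ) else 0) = 0 := by
        rw [if_neg]; omega
      rw [h1, zero_div, sub_zero]
      by_cases hkj : k ≤ j
      · rw [if_pos hkj, if_neg (by omega), zero_div]
      · rw [if_neg hkj]
    rw [Finset.sum_congr rfl hsum, Finset.sum_const_zero, mul_zero]
    simp [gfun]
  · -- j > n : only the first part contributes, at k = j - n
    have hsum : ∀ k ∈ Finset.Icc 1 m,
        ((if k ≤ j then (if j - k = n then (1:ℂ) else 0) / ((f j - f (j - k) : ℝ) : ℂ) else 0)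
          - (if j + k = n then (1:ℂ) else 0) / ((f (j + k) - f j : ℝ) : ℂ))
        = if k = j - n then 1 / ((f j - f n : ℝ) : ℂ) else 0 := by
      intro k hk
      rw [Finset.mem_Icc] at hk
      have h2 : (if j + k = n then (1:ℂ) else 0) = 0 := by rw [if_neg]; omega
      rw [h2, zero_div, sub_zero]
      rcases eq_or_ne k (j - n) with hkjn | hkjn
      · have hkj : k ≤ j := by omega
        have hjk : j - k = n := by omega
        rw [if_pos hkj, if_pos hjk, if_pos hkjn, hjk]
      · rw [if_neg hkjn]
        by_cases hkj : k ≤ j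
        · rw [if_pos hkj, if_neg (by omega), zero_div]
        · rw [if_neg hkj]
    rw [Finset.sum_congr rfl hsum, Finset.sum_ite_eq' (Finset.Icc 1 m) (j - n)]
    have hjic : (j ∈ Finset.Icc (n - m) (n + m)) ↔ (j - n ∈ Finset.Icc 1 m) := by
      simp only [Finset.mem_Icc]; omega
    rcases em (j - n ∈ Finset.Icc 1 m) with h | h
    · rw [if_pos h, if_pos (hjic.mpr h), gfun, if_neg hj.ne', mul_one_div]
    · rw [if_neg h, if_neg ((not_iff_not.mpr hjic).mpr h), mul_zero]

lemma coordsum (f : ℕ → ℝ) (hf : MemK f) (n m : ℕ) :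
    TfmSeq f m (⇑(xi n)) =
      ⇑(∑ j ∈ Finset.Icc (n - m) (n + m), lp.single 2 j (gfun f n j) : l2) := by
  funext j
  rw [TfmSeq_xi f hf n m j]
  simp only [lp.coeFn_sum, Finset.sum_apply, lp.single_apply, Finset.sum_dite_eq, Pi.single_apply, Finset.sum_ite_eq]


/-- Let `f ∈ 𝒦⁻` with `inf_n (f (n+1) - f n) = 0`. Then `T_f` is unbounded:
there is no constant `C` with `‖T_f φ‖ ≤ C ‖φ‖` for all finitely supported `φ`. -/
theorem stmt5 (f : ℕ → ℝ) (hf : MemKminus f)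
    (hinf : (⨅ n : ℕ, (f (n + 1) - f n)) = 0) :
    ¬ ∃ C : ℝ, ∀ φ Tφ : l2, FinSupp φ → InGraphTf f φ Tφ → ‖Tφ‖ ≤ C * ‖φ‖ := by
  rintro ⟨C, hC⟩
  have hsm := memK_strictMono hf.1
  -- For each n, xi n is in the domain with image ψ n
  set ψ : ℕ → l2 := fun n => ⟨gfun f n, gfun_memℓp hf n⟩ with hψ
  have hgraph : ∀ n, InGraphTf f (xi n) (ψ n) := by
    intro n
    have hm : ∀ m, Memℓp (TfmSeq f m (⇑(xi n))) 2 := by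
      intro m
      rw [coordsum f hf.1 n m]
      exact (∑ j ∈ Finset.Icc (n - m) (n + m), lp.single 2 j (gfun f n j) : l2).2
    refine ⟨hm, ?_⟩
    have heq : (fun m => (⟨TfmSeq f m (⇑(xi n)), hm m⟩ : l2))
        = fun m => (∑ j ∈ Finset.Icc (n - m) (n + m), lp.single 2 j (gfun f n j) : l2) := by
      funext m
      exact Subtype.ext (coordsum f hf.1 n m)
    rw [heq]
    have hhs : HasSum (fun j : ℕ => lp.single 2 j ((ψ n) j)) (ψ n) :=
      lp.hasSum_single (by norm_num) (ψ n)
    have hF : Tendsto (fun m => Finset.Icc (n - m) (n + m)) atTop atTop := by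
      apply tendsto_atTop_finset_of_monotone
      · intro a b hab
        apply Finset.Icc_subset_Icc <;> omega
      · intro x
        exact ⟨n + x, by simp only [Finset.mem_Icc]; omega⟩
    exact hhs.comp hF
  have hfin : ∀ n, FinSupp (xi n) := by
    intro n
    apply Set.Finite.subset (Set.finite_singleton n)
    intro j hj
    simp only [Function.mem_support, xi_apply] at hj
    by_contra h
    exact hj (if_neg h)
  have hxinorm : ∀ n, ‖xi n‖ = 1 := by
    intro n
    have := lp.norm_single (p := 2) (E := fun _ : ℕ => ℂ) (by norm_num) n (1:ℂ)
    simpa [xi] using this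
  -- lower bound on ‖ψ n‖
  have hlow : ∀ n, 1 / (f (n + 1) - f n) ≤ ‖ψ n‖ := by
    intro n
    have hgap : 0 < f (n + 1) - f n := by linarith [hf.1.2 n]
    have h1 := lp.norm_apply_le_norm (E := fun _ : ℕ => ℂ) (p := 2) (by norm_num) (ψ n) (n + 1)
    have h2 : ‖(ψ n) (n + 1)‖ = 1 / (f (n + 1) - f n) := by
      show ‖gfun f n (n + 1)‖ = _
      rw [gfun, if_neg (by omega)]
      rw [norm_div, Complex.norm_I, Complex.norm_real, Real.norm_eq_abs, abs_of_pos hgap]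
    rw [← h2]; exact h1
  have hCb : ∀ n, 1 / (f (n + 1) - f n) ≤ C := by
    intro n
    have := hC (xi n) (ψ n) (hfin n) (hgraph n)
    rw [hxinorm n, mul_one] at this
    exact (hlow n).trans this
  have hC0 : 0 < C := by
    have h1 := hCb 0
    have hgap : 0 < f 1 - f 0 := by linarith [hf.1.2 0]
    have h2 : (0:ℝ) < 1 / (f 1 - f 0) := by positivity
    linarith
  have hgapC : ∀ n, 1 / C ≤ f (n + 1) - f n := by
    intro n
    have hgap : 0 < f (n + 1) - f n := by linarith [hf.1.2 n]
    rw [div_le_iff₀ hC0]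
    have := hCb n
    rw [div_le_iff₀ hgap] at this
    linarith
  have : 1 / C ≤ ⨅ n : ℕ, (f (n + 1) - f n) := le_ciInf hgapC
  rw [hinf] at this
  have : (0:ℝ) < 1 / C := by positivity
  linarith
end
end

section
/- Let f∈𝓜(1). Then T_{f²} is an everywhere defined bounded operator on ℓ²(ℕ), where f² denotes the function n↦f(n)². -/
open Filter Topology
open scoped ENNReal

noncomputable section

/-- The conditions that `g, h` witness membership of `f` in `𝓜(β)`:
`g : ℕ → (0,∞)`, `h ∈ ℓ¹(ℕ_{≥1})`, `∑_n f(n)²/g(n) < ∞`, and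
`g(n) / (f(n)^β Δ_k(f², n))² ≤ h(k)²` for all `n` and all `k ≥ 1`. -/
def MWitness (β : ℝ) (f g h : ℕ → ℝ) : Prop :=
  (∀ n, 0 < g n) ∧
  Summable (fun k : ℕ => |h (k + 1)|) ∧
  Summable (fun n => (f n) ^ 2 / g n) ∧
  ∀ n k : ℕ, 1 ≤ k →
    g n / (Real.rpow (f n) β * ((f (n + k)) ^ 2 - (f n) ^ 2)) ^ 2 ≤ (h k) ^ 2

/-- The class `𝓜(β)`. -/
def MemM (β : ℝ) (f : ℕ → ℝ) : Prop := MemKminus f ∧ ∃ g h : ℕ → ℝ, MWitness β f g h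

/-- The class `𝓜_s(β)`: as `𝓜(β)`, with a uniform bound `C` on the sums
`∑_{k=1}^n g(n) / (f(n-k)^β (f(n)² - f(n-k)²))²` for the same witness `g`. -/
def MemMs (β : ℝ) (f : ℕ → ℝ) : Prop :=
  MemKminus f ∧ ∃ g h : ℕ → ℝ, MWitness β f g h ∧
    ∃ C : ℝ, 0 < C ∧ ∀ n : ℕ,
      (∑ k ∈ Finset.Icc 1 n,
        g n / (Real.rpow (f (n - k)) β * ((f n) ^ 2 - (f (n - k)) ^ 2)) ^ 2) < C


/-- auxiliary: A-part sequence -/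
def Aseq (f : ℕ → ℝ) (φ : ℕ → ℂ) (k n : ℕ) : ℂ :=
  if k ≤ n then φ (n - k) / ((f n - f (n - k) : ℝ) : ℂ) else 0

/-- auxiliary: B-part sequence -/
def Bseq (f : ℕ → ℝ) (φ : ℕ → ℂ) (k n : ℕ) : ℂ :=
  φ (n + k) / ((f (n + k) - f n : ℝ) : ℂ)

lemma rpow_two_eq (x : ℝ) : x ^ (2:ℝ) = x ^ 2 := by
  rw [show (2:ℝ) = ((2:ℕ):ℝ) by norm_num, Real.rpow_natCast]

lemma l2_norm_sq (x : l2) : ‖x‖ ^ 2 = ∑' n, ‖(x : ∀ _ : ℕ, ℂ) n‖ ^ 2 := by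
  have h := lp.norm_rpow_eq_tsum (p := 2) (by norm_num) x
  simp only [ENNReal.toReal_ofNat, rpow_two_eq] at h
  exact h

lemma l2_memℓp {v : ℕ → ℂ} (hv : Summable fun n => ‖v n‖ ^ 2) :
    Memℓp v (2 : ℝ≥0∞) := by
  apply memℓp_gen
  simpa only [ENNReal.toReal_ofNat, rpow_two_eq] using hv

lemma l2_norm_le {x : l2} {c : ℝ} (hc : 0 ≤ c)
    (h : (∑' n, ‖(x : ∀ _ : ℕ, ℂ) n‖ ^ 2) ≤ c ^ 2) : ‖x‖ ≤ c := by
  have h2 : ‖x‖ ^ 2 ≤ c ^ 2 := by rw [l2_norm_sq]; exact h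
  nlinarith [norm_nonneg x]

lemma TfmSeq_eq_sum (f : ℕ → ℝ) (m : ℕ) (φ : ℕ → ℂ) (n : ℕ) :
    TfmSeq f m φ n = ∑ k ∈ Finset.Icc 1 m, Complex.I * (Aseq f φ k n - Bseq f φ k n) := by
  simp only [TfmSeq, Aseq, Bseq, Finset.mul_sum]

set_option maxHeartbeats 2000000 in
/-- Let `f ∈ 𝓜(1)`. Then `T_{f²}` is an everywhere defined bounded operator
on `ℓ²(ℕ)`. -/
theorem stmt9 (f : ℕ → ℝ) (hf : MemM 1 f) :
    ∃ C : ℝ, ∀ φ : l2, ∃ Tφ : l2, InGraphTf (fsq f) φ Tφ ∧ ‖Tφ‖ ≤ C * ‖φ‖ := by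
  obtain ⟨⟨⟨hf0, hmono⟩, _hsum⟩, g, h, hgpos, hh1, hfg, hwit⟩ := hf
  have hfpos : ∀ n, 0 < f n := by
    intro n; induction n with
    | zero => exact hf0
    | succ k ih => exact ih.trans (hmono k)
  have hfsm : StrictMono f := strictMono_nat_of_lt_succ hmono
  have hΔpos : ∀ n k, 1 ≤ k → 0 < f (n + k) ^ 2 - f n ^ 2 := by
    intro n k hk
    have h1 : f n < f (n + k) := hfsm (by omega)
    nlinarith [hfpos n, hfpos (n + k)]
  -- the weight u
  set u : ℕ → ℝ := fun n => f n / Real.sqrt (g n) with hu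
  have hunn : ∀ n, 0 ≤ u n :=
    fun n => le_of_lt (div_pos (hfpos n) (Real.sqrt_pos.2 (hgpos n)))
  have husq : ∀ n, u n ^ 2 = f n ^ 2 / g n := by
    intro n
    simp only [hu, div_pow, Real.sq_sqrt (hgpos n).le]
  have husum : Summable (fun n => u n ^ 2) := by
    have : (fun n => u n ^ 2) = fun n => f n ^ 2 / g n := funext husq
    rw [this]; exact hfg
  -- key pointwise estimate
  have hkey : ∀ n k, 1 ≤ k → (f (n + k) ^ 2 - f n ^ 2)⁻¹ ≤ |h k| * u n := by
    intro n k hk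
    have hw := hwit n k hk
    rw [show Real.rpow (f n) 1 = f n from Real.rpow_one (f n)] at hw
    set Δ : ℝ := f (n + k) ^ 2 - f n ^ 2 with hΔdef
    have hΔ : 0 < Δ := hΔpos n k hk
    have hD : 0 < f n * Δ := mul_pos (hfpos n) hΔ
    have hg2 : g n ≤ (|h k| * (f n * Δ)) ^ 2 := by
      have := (div_le_iff₀ (by positivity : (0:ℝ) < (f n * Δ) ^ 2)).mp hw
      calc g n ≤ h k ^ 2 * (f n * Δ) ^ 2 := this
        _ = (|h k| * (f n * Δ)) ^ 2 := by rw [mul_pow |h k| (f n * Δ), sq_abs]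
    have hsg : 0 < Real.sqrt (g n) := Real.sqrt_pos.2 (hgpos n)
    have h1 : Real.sqrt (g n) ≤ |h k| * (f n * Δ) := by
      calc Real.sqrt (g n) ≤ Real.sqrt ((|h k| * (f n * Δ)) ^ 2) := Real.sqrt_le_sqrt hg2
        _ = |h k| * (f n * Δ) := Real.sqrt_sq (by positivity)
    have heq : |h k| * u n = (|h k| * f n) / Real.sqrt (g n) := by
      simp only [hu]; ring
    rw [inv_eq_one_div, heq, div_le_div_iff₀ hΔ hsg]
    nlinarith
  set G : ℝ := ∑' n, u n ^ 2 with hG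
  have hGnn : 0 ≤ G := tsum_nonneg (fun n => sq_nonneg _)
  set K : ℝ := Real.sqrt G with hK
  have hKnn : 0 ≤ K := Real.sqrt_nonneg _
  have hK2 : K ^ 2 = G := Real.sq_sqrt hGnn
  set H : ℝ := ∑' j : ℕ, |h (j + 1)| with hH
  refine ⟨2 * K * H, fun φ => ?_⟩
  have hφn : ∀ n, ‖(⇑φ : ℕ → ℂ) n‖ ≤ ‖φ‖ :=
    fun n => lp.norm_apply_le_norm (by norm_num) φ n
  -- bound on B entries
  have hBbd : ∀ k, 1 ≤ k → ∀ n, ‖Bseq (fsq f) (⇑φ) k n‖ ≤ |h k| * ‖φ‖ * u n := by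
    intro k hk n
    have hΔ := hΔpos n k hk
    have : Bseq (fsq f) (⇑φ) k n = φ (n + k) / ((f (n + k) ^ 2 - f n ^ 2 : ℝ) : ℂ) := rfl
    rw [this, norm_div, Complex.norm_real, Real.norm_eq_abs, abs_of_pos hΔ,
      div_eq_mul_inv]
    calc ‖(⇑φ : ℕ → ℂ) (n + k)‖ * (f (n + k) ^ 2 - f n ^ 2)⁻¹
        ≤ ‖φ‖ * (|h k| * u n) :=
          mul_le_mul (hφn _) (hkey n k hk) (by positivity) (norm_nonneg _)
      _ = |h k| * ‖φ‖ * u n := by ring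
  -- bound on shifted A entries
  have hAshift : ∀ k, 1 ≤ k → ∀ m, Aseq (fsq f) (⇑φ) k (m + k)
      = φ m / ((f (m + k) ^ 2 - f m ^ 2 : ℝ) : ℂ) := by
    intro k hk m
    simp only [Aseq, if_pos (Nat.le_add_left k m), Nat.add_sub_cancel]; rfl
  have hAzero : ∀ k n, ¬ k ≤ n → Aseq (fsq f) (⇑φ) k n = 0 := by
    intro k n hn; simp only [Aseq, if_neg hn]
  have hAbd : ∀ k, 1 ≤ k → ∀ m, ‖Aseq (fsq f) (⇑φ) k (m + k)‖ ≤ |h k| * ‖φ‖ * u m := by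
    intro k hk m
    have hΔ := hΔpos m k hk
    rw [hAshift k hk m, norm_div, Complex.norm_real, Real.norm_eq_abs, abs_of_pos hΔ,
      div_eq_mul_inv]
    calc ‖(⇑φ : ℕ → ℂ) m‖ * (f (m + k) ^ 2 - f m ^ 2)⁻¹
        ≤ ‖φ‖ * (|h k| * u m) :=
          mul_le_mul (hφn _) (hkey m k hk) (by positivity) (norm_nonneg _)
      _ = |h k| * ‖φ‖ * u m := by ring
  -- generic majorant summability
  have hmajk : ∀ k : ℕ, Summable (fun n => (|h k| * ‖φ‖ * u n) ^ 2) := by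
    intro k
    have : (fun n => (|h k| * ‖φ‖ * u n) ^ 2)
        = fun n => (|h k| * ‖φ‖) ^ 2 * u n ^ 2 := by funext n; ring
    rw [this]; exact husum.mul_left _
  -- summability of B norms squared
  have hBsq : ∀ k, 1 ≤ k → Summable (fun n => ‖Bseq (fsq f) (⇑φ) k n‖ ^ 2) := by
    intro k hk
    apply Summable.of_nonneg_of_le (fun n => by positivity) (fun n => ?_) (hmajk k)
    exact pow_le_pow_left₀ (norm_nonneg _) (hBbd k hk n) 2
  have hBts : ∀ k, 1 ≤ k →
      (∑' n, ‖Bseq (fsq f) (⇑φ) k n‖ ^ 2) ≤ (|h k| * ‖φ‖ * K) ^ 2 := by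
    intro k hk
    calc (∑' n, ‖Bseq (fsq f) (⇑φ) k n‖ ^ 2)
        ≤ ∑' n, (|h k| * ‖φ‖ * u n) ^ 2 := by
          apply Summable.tsum_le_tsum (fun n => pow_le_pow_left₀ (norm_nonneg _) (hBbd k hk n) 2)
            (hBsq k hk) (hmajk k)
      _ = (|h k| * ‖φ‖) ^ 2 * G := by
          rw [hG, ← tsum_mul_left]
          exact tsum_congr (fun n => by ring)
      _ = (|h k| * ‖φ‖ * K) ^ 2 := by rw [← hK2]; ring
  -- summability of A norms squared, via shifting
  have hAsq : ∀ k, 1 ≤ k → Summable (fun n => ‖Aseq (fsq f) (⇑φ) k n‖ ^ 2) := by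
    intro k hk
    rw [← summable_nat_add_iff k]
    apply Summable.of_nonneg_of_le (fun n => by positivity) (fun n => ?_) (hmajk k)
    exact pow_le_pow_left₀ (norm_nonneg _) (hAbd k hk n) 2
  have hAts : ∀ k, 1 ≤ k →
      (∑' n, ‖Aseq (fsq f) (⇑φ) k n‖ ^ 2) ≤ (|h k| * ‖φ‖ * K) ^ 2 := by
    intro k hk
    have hshiftsum : Summable (fun m => ‖Aseq (fsq f) (⇑φ) k (m + k)‖ ^ 2) :=
      (summable_nat_add_iff k).mpr (hAsq k hk)
    have hsplit := Summable.sum_add_tsum_nat_add'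
        (f := fun n => ‖Aseq (fsq f) (⇑φ) k n‖ ^ 2) (k := k) hshiftsum
    have hfin : (∑ i ∈ Finset.range k, ‖Aseq (fsq f) (⇑φ) k i‖ ^ 2) = 0 := by
      apply Finset.sum_eq_zero
      intro i hi
      rw [hAzero k i (Finset.mem_range.mp hi).not_ge]
      simp
    calc (∑' n, ‖Aseq (fsq f) (⇑φ) k n‖ ^ 2)
        = ∑' m, ‖Aseq (fsq f) (⇑φ) k (m + k)‖ ^ 2 := by rw [← hsplit, hfin, zero_add]
      _ ≤ ∑' m, (|h k| * ‖φ‖ * u m) ^ 2 := by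
          apply Summable.tsum_le_tsum (fun m => pow_le_pow_left₀ (norm_nonneg _) (hAbd k hk m) 2)
            hshiftsum (hmajk k)
      _ = (|h k| * ‖φ‖) ^ 2 * G := by
          rw [hG, ← tsum_mul_left]
          exact tsum_congr (fun n => by ring)
      _ = (|h k| * ‖φ‖ * K) ^ 2 := by rw [← hK2]; ring
  -- lp elements
  have hAmem : ∀ k, 1 ≤ k → Memℓp (Aseq (fsq f) (⇑φ) k) 2 :=
    fun k hk => l2_memℓp (hAsq k hk)
  have hBmem : ∀ k, 1 ≤ k → Memℓp (Bseq (fsq f) (⇑φ) k) 2 :=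
    fun k hk => l2_memℓp (hBsq k hk)
  have hk1 : ∀ j : ℕ, 1 ≤ j + 1 := fun j => Nat.le_add_left 1 j
  set aA : ℕ → l2 := fun j => (⟨Aseq (fsq f) (⇑φ) (j + 1), hAmem (j + 1) (hk1 j)⟩ : l2)
    with haA
  set aB : ℕ → l2 := fun j => (⟨Bseq (fsq f) (⇑φ) (j + 1), hBmem (j + 1) (hk1 j)⟩ : l2)
    with haB
  set aa : ℕ → l2 := fun j => Complex.I • (aA j - aB j) with haa
  have haAco : ∀ j, (⇑(aA j) : ℕ → ℂ) = Aseq (fsq f) (⇑φ) (j + 1) := fun j => rfl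
  have haBco : ∀ j, (⇑(aB j) : ℕ → ℂ) = Bseq (fsq f) (⇑φ) (j + 1) := fun j => rfl
  have hAnorm : ∀ j, ‖aA j‖ ≤ |h (j + 1)| * ‖φ‖ * K := by
    intro j
    apply l2_norm_le (by positivity)
    have := hAts (j + 1) (hk1 j)
    rw [← haAco j] at this
    exact this
  have hBnorm : ∀ j, ‖aB j‖ ≤ |h (j + 1)| * ‖φ‖ * K := by
    intro j
    apply l2_norm_le (by positivity)
    have := hBts (j + 1) (hk1 j)
    rw [← haBco j] at this
    exact this
  have haabd : ∀ j : ℕ, ‖aa j‖ ≤ 2 * K * ‖φ‖ * |h (j + 1)| := by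
    intro j
    have h1 : ‖aa j‖ = ‖aA j - aB j‖ := by
      rw [haa]; simp only [norm_smul, Complex.norm_I, one_mul]
    rw [h1]
    calc ‖aA j - aB j‖ ≤ ‖aA j‖ + ‖aB j‖ := norm_sub_le _ _
      _ ≤ 2 * K * ‖φ‖ * |h (j + 1)| := by
          have := hAnorm j; have := hBnorm j; linarith
  have hbndsum : Summable (fun j : ℕ => 2 * K * ‖φ‖ * |h (j + 1)|) := hh1.mul_left _
  have haasum : Summable aa := Summable.of_norm_bounded hbndsum haabd
  obtain ⟨L, hL⟩ := haasum
  have hcoe : ∀ m, (⇑(∑ j ∈ Finset.range m, aa j) : ℕ → ℂ) = TfmSeq (fsq f) m ⇑φ := by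
    intro m
    funext n
    have hsum0 : (⇑(∑ j ∈ Finset.range m, aa j) : ℕ → ℂ) n
        = ∑ j ∈ Finset.range m, (⇑(aa j) : ℕ → ℂ) n := by
      induction m with
      | zero => simp [lp.coeFn_zero]
      | succ m ih =>
          rw [Finset.sum_range_succ, lp.coeFn_add, Pi.add_apply, ih, Finset.sum_range_succ]
    rw [hsum0, TfmSeq_eq_sum, ← Finset.Ico_add_one_right_eq_Icc, Finset.sum_Ico_eq_sum_range]
    simp only [Nat.add_sub_cancel]
    apply Finset.sum_congr rfl
    intro j _
    have h2 : (⇑(aa j) : ℕ → ℂ) n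
        = Complex.I * (Aseq (fsq f) (⇑φ) (j + 1) n - Bseq (fsq f) (⇑φ) (j + 1) n) := by
      rw [haa]
      simp only [lp.coeFn_smul, Pi.smul_apply, lp.coeFn_sub, Pi.sub_apply, smul_eq_mul,
        haAco, haBco]
    rw [h2, add_comm 1 j]
  have hmem : ∀ m, Memℓp (TfmSeq (fsq f) m (⇑φ)) 2 := by
    intro m
    rw [← hcoe m]
    exact lp.memℓp _
  refine ⟨L, ⟨hmem, ?_⟩, ?_⟩
  · have htend := hL.tendsto_sum_nat
    have heqfun : (fun m => (⟨TfmSeq (fsq f) m (⇑φ), hmem m⟩ : l2))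
        = fun m => ∑ j ∈ Finset.range m, aa j := by
      funext m
      exact lp.ext (hcoe m).symm
    rw [heqfun]
    exact htend
  · have hnormsum : Summable (fun j => ‖aa j‖) :=
      Summable.of_nonneg_of_le (fun j => norm_nonneg _) haabd hbndsum
    have h1 : ‖L‖ ≤ ∑' j, ‖aa j‖ := by
      rw [← hL.tsum_eq]
      exact norm_tsum_le_tsum_norm hnormsum
    have h2 : (∑' j, ‖aa j‖) ≤ ∑' j : ℕ, 2 * K * ‖φ‖ * |h (j + 1)| :=
      Summable.tsum_le_tsum haabd hnormsum hbndsum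
    have h3 : (∑' j : ℕ, 2 * K * ‖φ‖ * |h (j + 1)|) = 2 * K * ‖φ‖ * H := by
      rw [hH, ← tsum_mul_left]
    calc ‖L‖ ≤ 2 * K * ‖φ‖ * H := by linarith
      _ = 2 * K * H * ‖φ‖ := by ring
end
end
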